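/- Let D be a domain in ℂ and let u : D → [0,∞) be an inf-harmonic function (i.e., the pointwise infimum of a nonempty family of nonnegative harmonic functions on D). If u is not identically zero, then u(λ) > 0 for all λ ∈ D, and for all λ₁, λ₂ ∈ D one has 1/τ_D(λ₁,λ₂) ≤ u(λ₁)/u(λ₂) ≤ τ_D(λ₁,λ₂), where τ_D(λ₁,λ₂) is the Harnack distance, i.e., the smallest constant τ such that 1/τ ≤ h(λ₁)/h(λ₂) ≤ τ for all positive harmonic functions h on D. -/

import Mathlib

open Complex Metric Set Filter
open scoped ENNReal

/-- A real-valued function is harmonic on `D` if near each point of `D`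
it is the real part of a holomorphic function. -/
def HarmonicOnSet (f : ℂ → ℝ) (D : Set ℂ) : Prop :=
  ∀ z ∈ D, ∃ ε > 0, Metric.ball z ε ⊆ D ∧
    ∃ F : ℂ → ℂ, DifferentiableOn ℂ F (Metric.ball z ε) ∧
      ∀ w ∈ Metric.ball z ε, f w = (F w).re

/-- `u` is inf-harmonic on `D`: the pointwise infimum of a nonempty family of
nonnegative harmonic functions on `D`. -/
def InfHarmonicOn (u : ℂ → ℝ) (D : Set ℂ) : Prop :=
  ∃ H : Set (ℂ → ℝ), H.Nonempty ∧
    (∀ h ∈ H, HarmonicOnSet h D) ∧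
    (∀ h ∈ H, ∀ z ∈ D, 0 ≤ h z) ∧
    (∀ z ∈ D, u z = sInf ((fun h => h z) '' H))


/-- The Harnack distance of `D` at `z₁, z₂`: the smallest `τ > 0` such that every
positive harmonic function `h` on `D` satisfies `1/τ ≤ h z₁ / h z₂ ≤ τ`. -/
noncomputable def harnackDist (D : Set ℂ) (z₁ z₂ : ℂ) : ℝ :=
  sInf {τ : ℝ | 0 < τ ∧ ∀ h : ℂ → ℝ, HarmonicOnSet h D → (∀ z ∈ D, 0 < h z) →
    1 / τ ≤ h z₁ / h z₂ ∧ h z₁ / h z₂ ≤ τ}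

open scoped NNReal

lemma deriv_eq_zero_of_re_eventually_zero {K : ℂ → ℂ} {z : ℂ}
    (hd : DifferentiableAt ℂ K z) (h : ∀ᶠ w in nhds z, (K w).re = 0) :
    deriv K z = 0 := by
  have hK := hd.hasDerivAt
  have key : ∀ v : ℂ, (deriv K z * v).re = 0 := by
    intro v
    have hγ : HasDerivAt (fun t : ℝ => z + t • v) v 0 := by
      simpa using ((hasDerivAt_id (0:ℝ)).smul_const v).const_add z
    have hγ0 : (fun t : ℝ => z + t • v) 0 = z := by simp
    have hcomp : HasDerivAt (fun t : ℝ => K (z + t • v)) (v • deriv K z) 0 := by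
      refine HasDerivAt.scomp (0:ℝ) ?_ hγ
      simpa using hK
    have hre : HasDerivAt (fun t : ℝ => (K (z + t • v)).re) (v • deriv K z).re 0 :=
      Complex.reCLM.hasFDerivAt.comp_hasDerivAt 0 hcomp
    have hev : (fun t : ℝ => (K (z + t • v)).re) =ᶠ[nhds (0:ℝ)] (fun _ => 0) := by
      have hc : ContinuousAt (fun t : ℝ => z + t • v) 0 := hγ.continuousAt
      have := hc.tendsto
      simp only [zero_smul, add_zero] at this
      filter_upwards [this.eventually h] with t ht using ht
    have : HasDerivAt (fun _ : ℝ => (0:ℝ)) (v • deriv K z).re 0 := hre.congr_of_eventuallyEq hev.symm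
    have h0 := (hasDerivAt_const (0:ℝ) (0:ℝ)).unique this
    simpa [smul_eq_mul, mul_comm] using h0.symm
  have h1 := key 1
  have h2 := key Complex.I
  simp [Complex.mul_re, Complex.I_re, Complex.I_im] at h1 h2
  exact Complex.ext (by simpa using h1) (by simpa using h2)

lemma deriv_unique_of_re_eq {F G : ℂ → ℂ} {z : ℂ} (hF : DifferentiableAt ℂ F z)
    (hG : DifferentiableAt ℂ G z) (h : ∀ᶠ w in nhds z, (F w).re = (G w).re) :
    deriv F z = deriv G z := by
  have := deriv_eq_zero_of_re_eventually_zero (hF.sub hG)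
    (by filter_upwards [h] with w hw; simp [Complex.sub_re, hw])
  rw [deriv_sub hF hG] at this
  exact sub_eq_zero.mp this

lemma exists_conjDeriv {h : ℂ → ℝ} {D : Set ℂ} (hh : HarmonicOnSet h D) :
    ∃ g : ℂ → ℂ, (∀ z ∈ D, DifferentiableAt ℂ g z) ∧
      ∀ z ∈ D, ∀ (ε : ℝ) (F : ℂ → ℂ), 0 < ε → ball z ε ⊆ D →
        DifferentiableOn ℂ F (ball z ε) → (∀ w ∈ ball z ε, h w = (F w).re) →
        ∀ w ∈ ball z ε, g w = deriv F w := by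
  classical
  have hrep : ∀ z : ℂ, ∃ p : ℝ × (ℂ → ℂ), z ∈ D → 0 < p.1 ∧ ball z p.1 ⊆ D ∧
      DifferentiableOn ℂ p.2 (ball z p.1) ∧ ∀ w ∈ ball z p.1, h w = (p.2 w).re := by
    intro z
    by_cases hz : z ∈ D
    · obtain ⟨ε, hε, hsub, F, hF, hFre⟩ := hh z hz
      exact ⟨(ε, F), fun _ => ⟨hε, hsub, hF, hFre⟩⟩
    · exact ⟨(1, 0), fun hz' => absurd hz' hz⟩
  choose P hP using hrep
  have huniq : ∀ (z w : ℂ) (ε : ℝ) (F : ℂ → ℂ), 0 < ε →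
      DifferentiableOn ℂ F (ball z ε) → (∀ y ∈ ball z ε, h y = (F y).re) →
      w ∈ ball z ε → w ∈ D → deriv F w = deriv (P w).2 w := by
    intro z w ε F hε hF hre hw hwD
    obtain ⟨hε', hsub', hF', hre'⟩ := hP w hwD
    refine deriv_unique_of_re_eq (hF.differentiableAt (isOpen_ball.mem_nhds hw))
      (hF'.differentiableAt (isOpen_ball.mem_nhds (mem_ball_self hε'))) ?_
    filter_upwards [(isOpen_ball.inter isOpen_ball).mem_nhds
      (⟨hw, mem_ball_self hε'⟩ : w ∈ ball z ε ∩ ball w (P w).1)] with y hy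
    rw [← hre y hy.1, ← hre' y hy.2]
  refine ⟨fun z => if hz : z ∈ D then deriv (P z).2 z else 0, ?_, ?_⟩
  · intro z hz
    obtain ⟨hε, hsub, hF, hre⟩ := hP z hz
    have hag : ∀ w ∈ ball z (P z).1, (if hw : w ∈ D then deriv (P w).2 w else 0) = deriv (P z).2 w := by
      intro w hw
      rw [dif_pos (hsub hw)]
      exact (huniq z w (P z).1 (P z).2 hε hF hre hw (hsub hw)).symm
    have hda : DifferentiableAt ℂ (deriv (P z).2) z :=
      (((hF.analyticOnNhd isOpen_ball).deriv) z (mem_ball_self hε)).differentiableAt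
    refine hda.congr_of_eventuallyEq ?_
    filter_upwards [isOpen_ball.mem_nhds (mem_ball_self hε)] with w hw using hag w hw
  · intro z hz ε F hε hsub hF hre w hw
    have heq : (fun z => if hz : z ∈ D then deriv (P z).2 z else 0) w = deriv (P w).2 w :=
      dif_pos (hsub hw)
    rw [heq]
    exact (huniq z w ε F hε hF hre hw (hsub hw)).symm

lemma normSq_add_conj (A B : ℂ) :
    Complex.normSq (A + (starRingEnd ℂ) B) = Complex.normSq (A - B) + 4 * A.re * B.re := by
  simp [Complex.normSq_apply, Complex.add_re, Complex.add_im, Complex.sub_re, Complex.sub_im,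
    Complex.conj_re, Complex.conj_im]
  ring

lemma rep_on_ball {h : ℂ → ℝ} {D : Set ℂ} (hD : IsOpen D) (hh : HarmonicOnSet h D)
    {c : ℂ} {ε : ℝ} (hε : 0 < ε) (hsub : closedBall c ε ⊆ D) :
    ∃ F : ℂ → ℂ, DifferentiableOn ℂ F (ball c (ε/2)) ∧
      ∀ w ∈ ball c (ε/2), h w = (F w).re := by
  obtain ⟨g, hgd, hgu⟩ := exists_conjDeriv hh
  -- power series of g on ball c ε
  have hcoe : ((ε.toNNReal : ℝ≥0) : ℝ) = ε := Real.coe_toNNReal ε hε.le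
  have hgDiff : DifferentiableOn ℂ g (closedBall c ε.toNNReal) := fun z hz =>
    (hgd z (hsub (by rwa [hcoe] at hz))).differentiableWithinAt
  have hps : HasFPowerSeriesOnBall g (cauchyPowerSeries g c ε.toNNReal) c ε.toNNReal :=
    hgDiff.hasFPowerSeriesOnBall (by simpa using hε)
  set p := cauchyPowerSeries g c ε.toNNReal with hp
  -- summability of coefficients at radius ε/2
  have hrlt : ((ε/2).toNNReal : ℝ≥0∞) < p.radius := by
    refine lt_of_lt_of_le ?_ hps.r_le
    rw [ENNReal.coe_lt_coe]
    rw [← NNReal.coe_lt_coe, hcoe, Real.coe_toNNReal _ (by positivity : (0:ℝ) ≤ ε/2)]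
    linarith
  have hSu : Summable fun n => ‖p n‖ * ((ε/2).toNNReal : ℝ) ^ n :=
    p.summable_norm_mul_pow hrlt
  have hcoe2 : (((ε/2).toNNReal : ℝ≥0) : ℝ) = ε/2 := Real.coe_toNNReal _ (by positivity)
  -- the primitive as a tsum
  set f : ℕ → ℂ → ℂ := fun n y => ((n : ℂ)+1)⁻¹ * p.coeff n * (y - c)^(n+1) with hf
  set f' : ℕ → ℂ → ℂ := fun n y => p.coeff n * (y - c)^n with hf'
  have hder : ∀ n y, HasDerivAt (f n) (f' n y) y := by
    intro n y
    have hpow : HasDerivAt (fun y : ℂ => (y - c)^(n+1)) (((n:ℂ)+1) * (y - c)^n) y := by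
      have := ((hasDerivAt_id y).sub_const c).pow (n+1)
      simp at this
      exact this
    have := hpow.const_mul (((n : ℂ)+1)⁻¹ * p.coeff n)
    refine this.congr_deriv ?_
    have hne : ((n:ℂ)+1) ≠ 0 := Nat.cast_add_one_ne_zero n
    rw [hf']
    field_simp
  have hbound : ∀ n y, y ∈ ball c (ε/2) → ‖f' n y‖ ≤ ‖p n‖ * ((ε/2).toNNReal : ℝ) ^ n := by
    intro n y hy
    rw [hf']
    simp only [norm_mul, norm_pow]
    rw [← p.norm_apply_eq_norm_coef]
    have h1 : ‖y - c‖ ≤ ((ε/2).toNNReal : ℝ) := by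
      rw [hcoe2]
      have := mem_ball_iff_norm.mp hy
      linarith
    exact mul_le_mul_of_nonneg_left (pow_le_pow_left₀ (norm_nonneg _) h1 n) (norm_nonneg _)
  have hsum0 : Summable fun n => f n c := by
    have : (fun n => f n c) = fun _ => (0:ℂ) := by
      funext n; simp [hf]
    rw [this]; exact summable_zero
  have hF₀ : ∀ y ∈ ball c (ε/2), HasDerivAt (fun z => ∑' n, f n z) (∑' n, f' n y) y := by
    intro y hy
    exact hasDerivAt_tsum_of_isPreconnected hSu isOpen_ball
      (convex_ball c (ε/2)).isPreconnected (fun n z hz => hder n z)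
      hbound (mem_ball_self (by positivity)) hsum0 hy
  -- identify the derivative sum with g
  have hsum_g : ∀ y ∈ ball c (ε/2), (∑' n, f' n y) = g y := by
    intro y hy
    have hmem : y - c ∈ Metric.eball (0:ℂ) ε.toNNReal := by
      rw [Metric.mem_eball, edist_lt_coe, ← NNReal.coe_lt_coe, hcoe, coe_nndist,
        dist_zero_right]
      have := mem_ball_iff_norm.mp hy
      linarith
    have := hps.hasSum hmem
    have h2 : g (c + (y - c)) = g y := by ring_nf
    rw [h2] at this
    have h3 : (fun n => p n fun _ => y - c) = fun n => f' n y := by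
      funext n
      rw [p.apply_eq_pow_smul_coeff, smul_eq_mul, hf']
      ring
    rw [h3] at this
    exact this.tsum_eq
  -- the candidate holomorphic function
  set F : ℂ → ℂ := fun y => (∑' n, f n y) + (((h c : ℝ) : ℂ) - (((∑' n, f n c).re : ℝ) : ℂ)) with hF
  have hFder : ∀ y ∈ ball c (ε/2), HasDerivAt F (g y) y := by
    intro y hy
    have := (hF₀ y hy).add_const ((((h c : ℝ)) : ℂ) - (((∑' n, f n c).re : ℝ) : ℂ))
    rwa [hsum_g y hy] at this
  have hFdiff : DifferentiableOn ℂ F (ball c (ε/2)) := fun y hy =>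
    (hFder y hy).differentiableAt.differentiableWithinAt
  have hFc : (F c).re = h c := by simp [hF]
  refine ⟨F, hFdiff, ?_⟩
  -- clopen argument: k = h - Re F is locally constant on ball c (ε/2), zero at c
  set k : ℂ → ℝ := fun w => h w - (F w).re with hk
  have hballD : ball c (ε/2) ⊆ D := by
    refine Subset.trans ?_ hsub
    exact Subset.trans (ball_subset_ball (by linarith)) ball_subset_closedBall
  have hloc : ∀ w ∈ ball c (ε/2), ∃ δ > 0, ball w δ ⊆ ball c (ε/2) ∧
      ∀ y ∈ ball w δ, k y = k w := by
    intro w hw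
    have hwD : w ∈ D := hballD hw
    obtain ⟨εw, hεw, hsubw, Fw, hFw, hFwre⟩ := hh w hwD
    refine ⟨min εw (ε/2 - dist w c), lt_min hεw (by have := mem_ball.mp hw; linarith), ?_, ?_⟩
    · refine ball_subset_ball' ?_
      have : min εw (ε/2 - dist w c) ≤ ε/2 - dist w c := min_le_right _ _
      linarith
    · intro y hy
      have hysub : ball w (min εw (ε/2 - dist w c)) ⊆ ball w εw := ball_subset_ball (min_le_left _ _)
      have hybig : ball w (min εw (ε/2 - dist w c)) ⊆ ball c (ε/2) := by
        refine ball_subset_ball' ?_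
        have : min εw (ε/2 - dist w c) ≤ ε/2 - dist w c := min_le_right _ _
        linarith
      -- G = Fw - F has zero derivative on this small ball
      have hG0 : ∀ x ∈ ball w (min εw (ε/2 - dist w c)), HasDerivAt (fun t => Fw t - F t) 0 x := by
        intro x hx
        have hx1 : x ∈ ball w εw := hysub hx
        have hFwx : HasDerivAt Fw (g x) x := by
          have hd := (hFw.differentiableAt (isOpen_ball.mem_nhds hx1)).hasDerivAt
          rwa [← hgu w hwD εw Fw hεw hsubw hFw hFwre x hx1] at hd
        have hFx : HasDerivAt F (g x) x := hFder x (hybig hx)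
        have := hFwx.sub hFx
        rw [sub_self] at this
        exact this
      have hconst : ∀ x ∈ ball w (min εw (ε/2 - dist w c)),
          Fw x - F x = Fw w - F w := by
        intro x hx
        refine Convex.is_const_of_fderivWithin_eq_zero (𝕜 := ℂ)
          (convex_ball w _) (fun t ht => ((hG0 t ht).differentiableAt).differentiableWithinAt)
          (fun t ht => ?_) hx (mem_ball_self (lt_min hεw (by have := mem_ball.mp hw; linarith)))
        have hfd : fderiv ℂ (fun t => Fw t - F t) t =
            ContinuousLinearMap.smulRight (1 : ℂ →L[ℂ] ℂ) (0:ℂ) :=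
          (hasDerivAt_iff_hasFDerivAt.mp (hG0 t ht)).fderiv
        rw [fderivWithin_of_isOpen isOpen_ball ht, hfd]
        ext
        simp
      have hyw : y ∈ ball w εw := hysub hy
      have hww : w ∈ ball w εw := mem_ball_self hεw
      have := hconst y hy
      have hre : (Fw y - F y).re = (Fw w - F w).re := by rw [this]
      simp only [Complex.sub_re] at hre
      rw [hk]
      simp only
      rw [← hFwre y hyw, ← hFwre w hww] at hre
      linarith
  -- preconnectedness
  have hkc : k c = 0 := by simp [hk, hFc]
  have hkzero : ∀ w ∈ ball c (ε/2), k w = 0 := by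
    set U : Set ℂ := {w | ∃ δ > 0, ball w δ ⊆ ball c (ε/2) ∧ ∀ y ∈ ball w δ, k y = 0} with hU
    set V : Set ℂ := {w | ∃ δ > 0, ball w δ ⊆ ball c (ε/2) ∧
      (∀ y ∈ ball w δ, k y = k w) ∧ k w ≠ 0} with hV
    have hUopen : IsOpen U := by
      rw [Metric.isOpen_iff]
      rintro w ⟨δ, hδ, hsub', hzero⟩
      refine ⟨δ, hδ, ?_⟩
      rintro w' hw'
      refine ⟨δ - dist w' w, by have := mem_ball.mp hw'; linarith, ?_, ?_⟩
      · exact Subset.trans (ball_subset_ball' (by linarith)) hsub'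
      · intro y hy
        exact hzero y (ball_subset_ball' (by linarith) hy)
    have hVopen : IsOpen V := by
      rw [Metric.isOpen_iff]
      rintro w ⟨δ, hδ, hsub', hcst, hne⟩
      refine ⟨δ, hδ, ?_⟩
      rintro w' hw'
      have hkw' : k w' = k w := hcst w' hw'
      refine ⟨δ - dist w' w, by have := mem_ball.mp hw'; linarith, ?_, ?_, ?_⟩
      · exact Subset.trans (ball_subset_ball' (by linarith)) hsub'
      · intro y hy
        rw [hkw']
        exact hcst y (ball_subset_ball' (by linarith) hy)
      · rw [hkw']; exact hne
    have hcover : ball c (ε/2) ⊆ U ∪ V := by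
      intro w hw
      obtain ⟨δ, hδ, hsub', hcst⟩ := hloc w hw
      by_cases hkw : k w = 0
      · exact Or.inl ⟨δ, hδ, hsub', fun y hy => by rw [hcst y hy, hkw]⟩
      · exact Or.inr ⟨δ, hδ, hsub', hcst, hkw⟩
    have hcU : (ball c (ε/2) ∩ U).Nonempty := by
      obtain ⟨δ, hδ, hsub', hcst⟩ := hloc c (mem_ball_self (by positivity))
      exact ⟨c, mem_ball_self (by positivity),
        ⟨δ, hδ, hsub', fun y hy => by rw [hcst y hy, hkc]⟩⟩
    by_contra hcon
    push_neg at hcon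
    obtain ⟨w₀, hw₀, hkw₀⟩ := hcon
    have hcV : (ball c (ε/2) ∩ V).Nonempty := by
      obtain ⟨δ, hδ, hsub', hcst⟩ := hloc w₀ hw₀
      exact ⟨w₀, hw₀, ⟨δ, hδ, hsub', hcst, hkw₀⟩⟩
    obtain ⟨x, hxball, hxU, hxV⟩ := (convex_ball c (ε/2)).isPreconnected U V hUopen hVopen
      hcover hcU hcV
    obtain ⟨δ₁, hδ₁, _, hz₁⟩ := hxU
    obtain ⟨_, _, _, _, hne⟩ := hxV
    exact hne (hz₁ x (mem_ball_self hδ₁))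
  intro w hw
  have := hkzero w hw
  rw [hk] at this
  simp only at this
  linarith

/-- Harnack inequality on small balls, with uniform radius. -/
lemma ballHarnack {D : Set ℂ} (hD : IsOpen D) {c : ℂ} (hc : c ∈ D) :
    ∃ ρ > 0, ball c ρ ⊆ D ∧ ∀ h : ℂ → ℝ, HarmonicOnSet h D → (∀ z ∈ D, 0 ≤ h z) →
      ∀ w ∈ ball c ρ, h w ≤ 3 * h c ∧ h c ≤ 3 * h w := by
  obtain ⟨ε₀, hε₀, hball⟩ := Metric.isOpen_iff.mp hD c hc
  set ε := ε₀ / 2 with hεdef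
  have hε : 0 < ε := by positivity
  have hsub : closedBall c ε ⊆ D :=
    Subset.trans (closedBall_subset_ball (by simp [hεdef]; linarith)) hball
  set r := ε / 2 with hrdef
  refine ⟨r / 2, by positivity, ?_, ?_⟩
  · exact Subset.trans (ball_subset_ball (by linarith)) (Subset.trans ball_subset_closedBall hsub)
  intro h hh hpos w hw
  obtain ⟨F, hF, hFre⟩ := rep_on_ball hD hh hε hsub
  have hballD : ball c r ⊆ D :=
    Subset.trans (ball_subset_ball (by linarith)) (Subset.trans ball_subset_closedBall hsub)
  have hwr : w ∈ ball c r := ball_subset_ball (by linarith) hw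
  have hcr : c ∈ ball c r := mem_ball_self (by positivity)
  suffices key : ∀ δ : ℝ, 0 < δ → h w + δ ≤ 3*(h c + δ) ∧ h c + δ ≤ 3*(h w + δ) by
    constructor
    · refine le_of_forall_pos_le_add fun η hη => ?_
      have := (key (η/2) (by positivity)).1; linarith
    · refine le_of_forall_pos_le_add fun η hη => ?_
      have := (key (η/2) (by positivity)).2; linarith
  intro δ hδ
  set Fδ : ℂ → ℂ := fun y => F y + (δ:ℂ) with hFδ
  have hFδre : ∀ y ∈ ball c r, (Fδ y).re = h y + δ := by
    intro y hy
    simp [hFδ, ← hFre y hy]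
  have hFδpos : ∀ y ∈ ball c r, 0 < (Fδ y).re := by
    intro y hy
    rw [hFδre y hy]
    have := hpos y (hballD hy)
    linarith
  set den : ℂ → ℂ := fun y => Fδ y + (starRingEnd ℂ) (Fδ c) with hden
  have hden_re : ∀ y ∈ ball c r, (den y).re = (Fδ y).re + (Fδ c).re := by
    intro y hy; simp [hden]
  have hden_pos : ∀ y ∈ ball c r, 0 < (den y).re := by
    intro y hy
    rw [hden_re y hy]
    have := hFδpos y hy
    have := hFδpos c hcr
    linarith
  have hden_ne : ∀ y ∈ ball c r, den y ≠ 0 := by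
    intro y hy h0
    have := hden_pos y hy
    rw [h0] at this
    simp at this
  set φ : ℂ → ℂ := fun y => (Fδ y - Fδ c) / den y with hφ
  have hFδd : DifferentiableOn ℂ Fδ (ball c r) := hF.add_const _
  have hφd : DifferentiableOn ℂ φ (ball c r) :=
    (hFδd.sub_const _).div (hFδd.add_const _) (fun y hy => hden_ne y hy)
  have hφc : φ c = 0 := by simp [hφ]
  have hnormSq : ∀ y ∈ ball c r, Complex.normSq (den y) =
      Complex.normSq (Fδ y - Fδ c) + 4 * (Fδ y).re * (Fδ c).re := by
    intro y hy
    exact normSq_add_conj (Fδ y) (Fδ c)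
  have hmaps : MapsTo φ (ball c r) (ball (φ c) 1) := by
    intro y hy
    rw [hφc, mem_ball, dist_zero_right]
    have habs : ‖Fδ y - Fδ c‖ < ‖den y‖ := by
      have h1 : Complex.normSq (Fδ y - Fδ c) < Complex.normSq (den y) := by
        rw [hnormSq y hy]
        have := mul_pos (hFδpos y hy) (hFδpos c hcr)
        nlinarith
      have h2 := Complex.sq_norm (Fδ y - Fδ c)
      have h3 := Complex.sq_norm (den y)
      nlinarith [norm_nonneg (Fδ y - Fδ c), norm_nonneg (den y)]
    show ‖(Fδ y - Fδ c) / den y‖ < 1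
    rw [norm_div]
    exact (div_lt_one (lt_of_le_of_lt (norm_nonneg _) habs)).mpr habs
  have hSch := Complex.dist_le_div_mul_dist_of_mapsTo_ball hφd (hmaps.mono_right ball_subset_closedBall) hwr
  have hφw : ‖φ w‖ ≤ 1/2 := by
    rw [hφc, dist_zero_right] at hSch
    have h1 : dist w c < r/2 := mem_ball.mp hw
    have h2 : (1:ℝ)/r * dist w c ≤ 1/2 := by
      rw [div_mul_eq_mul_div, one_mul, div_le_div_iff₀ (by positivity) (by norm_num)]
      have : 0 < r := by positivity
      linarith
    calc ‖φ w‖ = ‖φ w‖ := rfl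
    _ ≤ 1/r * dist w c := hSch
    _ ≤ 1/2 := h2
  -- extract the quadratic inequality
  have hnum_le : ‖Fδ w - Fδ c‖ ≤ 1/2 * ‖den w‖ := by
    have := hφw
    rw [hφ] at this
    simp only [norm_div] at this
    rwa [div_le_iff₀ (by
      have := hden_ne w hwr
      exact (norm_pos_iff.mpr this))] at this
    <;> skip
  have hsq : Complex.normSq (Fδ w - Fδ c) ≤ 1/4 * Complex.normSq (den w) := by
    have h2 := Complex.sq_norm (Fδ w - Fδ c)
    have h3 := Complex.sq_norm (den w)
    nlinarith [norm_nonneg (Fδ w - Fδ c), norm_nonneg (den w)]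
  set u := h w + δ with hu
  set α := h c + δ with hα
  have hupos : 0 < u := by have := hpos w (hballD hwr); rw [hu]; linarith
  have hαpos : 0 < α := by have := hpos c hc; rw [hα]; linarith
  have hid : Complex.normSq (den w) = Complex.normSq (Fδ w - Fδ c) + 4 * u * α := by
    rw [hnormSq w hwr, hFδre w hwr, hFδre c hcr]
  have hre_num : (Fδ w - Fδ c).re = u - α := by
    rw [Complex.sub_re, hFδre w hwr, hFδre c hcr]
  have hlow : (u - α)^2 ≤ Complex.normSq (Fδ w - Fδ c) := by
    rw [← hre_num, Complex.normSq_apply]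
    nlinarith [sq_nonneg (Fδ w - Fδ c).im]
  constructor
  · show u ≤ 3 * α
    nlinarith [hsq, hid, hlow, hupos, hαpos, mul_pos hupos hαpos]
  · show α ≤ 3 * u
    nlinarith [hsq, hid, hlow, hupos, hαpos, mul_pos hupos hαpos]

lemma harnack_chain {D : Set ℂ} (hD : IsOpen D) (hDc : IsConnected D) {z₀ : ℂ} (hz₀ : z₀ ∈ D) :
    ∀ w ∈ D, ∃ τ > 0, ∀ h : ℂ → ℝ, HarmonicOnSet h D → (∀ z ∈ D, 0 ≤ h z) →
      h w ≤ τ * h z₀ ∧ h z₀ ≤ τ * h w := by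
  set Q : ℂ → Prop := fun w => ∃ τ > 0, ∀ h : ℂ → ℝ, HarmonicOnSet h D → (∀ z ∈ D, 0 ≤ h z) →
      h w ≤ τ * h z₀ ∧ h z₀ ≤ τ * h w with hQdef
  set U : Set ℂ := {w | ∃ δ > 0, ball w δ ⊆ D ∧ ∀ w' ∈ ball w δ, Q w'} with hUdef
  set V : Set ℂ := {w | ∃ δ > 0, ball w δ ⊆ D ∧ ∀ w' ∈ ball w δ, ¬ Q w'} with hVdef
  have hUopen : IsOpen U := by
    rw [Metric.isOpen_iff]
    rintro w ⟨δ, hδ, hsub, hq⟩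
    refine ⟨δ, hδ, fun w' hw' => ?_⟩
    exact ⟨δ - dist w' w, by have := mem_ball.mp hw'; linarith,
      Subset.trans (ball_subset_ball' (by linarith)) hsub,
      fun y hy => hq y (ball_subset_ball' (by linarith) hy)⟩
  have hVopen : IsOpen V := by
    rw [Metric.isOpen_iff]
    rintro w ⟨δ, hδ, hsub, hq⟩
    refine ⟨δ, hδ, fun w' hw' => ?_⟩
    exact ⟨δ - dist w' w, by have := mem_ball.mp hw'; linarith,
      Subset.trans (ball_subset_ball' (by linarith)) hsub,
      fun y hy => hq y (ball_subset_ball' (by linarith) hy)⟩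
  have hcover : D ⊆ U ∪ V := by
    intro w hw
    obtain ⟨ρ, hρ, hsub, hH3⟩ := ballHarnack hD hw
    by_cases hq : Q w
    · left
      obtain ⟨τ, hτ, hb⟩ := hq
      refine ⟨ρ, hρ, hsub, fun w' hw' => ⟨3*τ, by linarith, fun h hh hpos => ?_⟩⟩
      obtain ⟨h1, h2⟩ := hH3 h hh hpos w' hw'
      obtain ⟨h3, h4⟩ := hb h hh hpos
      constructor <;> nlinarith
    · right
      refine ⟨ρ, hρ, hsub, fun w' hw' hq' => hq ?_⟩
      obtain ⟨τ, hτ, hb⟩ := hq'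
      refine ⟨3*τ, by linarith, fun h hh hpos => ?_⟩
      obtain ⟨h1, h2⟩ := hH3 h hh hpos w' hw'
      obtain ⟨h3, h4⟩ := hb h hh hpos
      constructor <;> nlinarith
  have hz₀U : z₀ ∈ U := by
    obtain ⟨ρ, hρ, hsub, hH3⟩ := ballHarnack hD hz₀
    refine ⟨ρ, hρ, hsub, fun w' hw' => ⟨3, by norm_num, fun h hh hpos => ?_⟩⟩
    obtain ⟨h1, h2⟩ := hH3 h hh hpos w' hw'
    exact ⟨h1, h2⟩
  intro w hw
  by_contra hq
  have hwV : w ∈ V := by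
    rcases hcover hw with hU | hV
    · obtain ⟨δ, hδ, _, hqq⟩ := hU
      exact absurd (hqq w (mem_ball_self hδ)) hq
    · exact hV
  obtain ⟨x, hxD, hxU, hxV⟩ := hDc.isPreconnected U V hUopen hVopen hcover
    ⟨z₀, hz₀, hz₀U⟩ ⟨w, hw, hwV⟩
  obtain ⟨δ₁, hδ₁, _, hq₁⟩ := hxU
  obtain ⟨δ₂, hδ₂, _, hq₂⟩ := hxV
  exact hq₂ x (mem_ball_self hδ₂) (hq₁ x (mem_ball_self hδ₁))

theorem harnack_ineq_infHarmonic (D : Set ℂ) (hD : IsOpen D) (hDc : IsConnected D)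
    (u : ℂ → ℝ) (hu : InfHarmonicOn u D) (hne : ∃ z ∈ D, u z ≠ 0) :
    (∀ z ∈ D, 0 < u z) ∧
    ∀ l₁ ∈ D, ∀ l₂ ∈ D,
      1 / harnackDist D l₁ l₂ ≤ u l₁ / u l₂ ∧ u l₁ / u l₂ ≤ harnackDist D l₁ l₂ := by
  obtain ⟨H, hHne, hHharm, hHpos, hHinf⟩ := hu
  obtain ⟨z₀, hz₀D, hz₀ne⟩ := hne
  have himg : ∀ z : ℂ, ((fun h => h z) '' H).Nonempty := fun z => hHne.image _
  have hbdd : ∀ z ∈ D, BddBelow ((fun h => h z) '' H) := by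
    intro z hz
    refine ⟨0, ?_⟩
    rintro x ⟨h, hh, rfl⟩
    exact hHpos h hh z hz
  have hu_le : ∀ z ∈ D, ∀ h ∈ H, u z ≤ h z := by
    intro z hz h hh
    rw [hHinf z hz]
    exact csInf_le (hbdd z hz) (mem_image_of_mem _ hh)
  have hu_ge : ∀ z ∈ D, ∀ b : ℝ, (∀ h ∈ H, b ≤ h z) → b ≤ u z := by
    intro z hz b hb
    rw [hHinf z hz]
    refine le_csInf (himg z) ?_
    rintro x ⟨h, hh, rfl⟩
    exact hb h hh
  have hu0 : ∀ z ∈ D, 0 ≤ u z := fun z hz => hu_ge z hz 0 (fun h hh => hHpos h hh z hz)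
  have huz₀ : 0 < u z₀ := lt_of_le_of_ne (hu0 _ hz₀D) (Ne.symm hz₀ne)
  have hHlow : ∀ h ∈ H, ∀ z ∈ D, 0 < h z := by
    intro h hh z hz
    obtain ⟨τ, hτ, hb⟩ := harnack_chain hD hDc hz z₀ hz₀D
    have h1 : u z₀ ≤ h z₀ := hu_le z₀ hz₀D h hh
    have h2 := (hb h (hHharm h hh) (fun y hy => hHpos h hh y hy)).1
    nlinarith
  have hupos : ∀ z ∈ D, 0 < u z := by
    intro z hz
    obtain ⟨τ, hτ, hb⟩ := harnack_chain hD hDc hz z₀ hz₀D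
    refine lt_of_lt_of_le (div_pos huz₀ hτ) (hu_ge z hz _ ?_)
    intro h hh
    have h1 : u z₀ ≤ h z₀ := hu_le z₀ hz₀D h hh
    have h2 := (hb h (hHharm h hh) (fun y hy => hHpos h hh y hy)).1
    rw [div_le_iff₀ hτ]
    nlinarith
  refine ⟨hupos, ?_⟩
  intro l₁ h₁ l₂ h₂
  set S := {τ : ℝ | 0 < τ ∧ ∀ h : ℂ → ℝ, HarmonicOnSet h D → (∀ z ∈ D, 0 < h z) →
    1 / τ ≤ h l₁ / h l₂ ∧ h l₁ / h l₂ ≤ τ} with hSdef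
  have hDist : harnackDist D l₁ l₂ = sInf S := rfl
  have hul1 : 0 < u l₁ := hupos l₁ h₁
  have hul2 : 0 < u l₂ := hupos l₂ h₂
  have hSne : S.Nonempty := by
    obtain ⟨τ, hτ, hb⟩ := harnack_chain hD hDc h₂ l₁ h₁
    refine ⟨max τ 1, lt_of_lt_of_le one_pos (le_max_right _ _), ?_⟩
    intro h hharm hpos'
    have hb' := hb h hharm (fun z hz => (hpos' z hz).le)
    have hp1 : 0 < h l₁ := hpos' l₁ h₁
    have hp2 : 0 < h l₂ := hpos' l₂ h₂
    have hmax : τ ≤ max τ 1 := le_max_left _ _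
    have hmaxpos : (0:ℝ) < max τ 1 := lt_of_lt_of_le one_pos (le_max_right _ _)
    constructor
    · rw [div_le_div_iff₀ hmaxpos hp2]
      nlinarith [hb'.2]
    · rw [div_le_iff₀ hp2]
      nlinarith [hb'.1]
  have hSbound : ∀ τ ∈ S, u l₁ ≤ τ * u l₂ ∧ u l₂ ≤ τ * u l₁ := by
    rintro τ ⟨hτ, hb⟩
    constructor
    · have hstep : ∀ h ∈ H, u l₁ / τ ≤ h l₂ := by
        intro h hh
        have hp := fun z hz => hHlow h hh z hz
        obtain ⟨hr1, hr2⟩ := hb h (hHharm h hh) hp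
        have hl2 : 0 < h l₂ := hp l₂ h₂
        rw [div_le_iff₀ hl2] at hr2
        have hu1 : u l₁ ≤ h l₁ := hu_le _ h₁ h hh
        rw [div_le_iff₀ hτ]
        nlinarith
      have := hu_ge l₂ h₂ _ hstep
      rw [div_le_iff₀ hτ] at this
      nlinarith
    · have hstep : ∀ h ∈ H, u l₂ / τ ≤ h l₁ := by
        intro h hh
        have hp := fun z hz => hHlow h hh z hz
        obtain ⟨hr1, hr2⟩ := hb h (hHharm h hh) hp
        have hl2 : 0 < h l₂ := hp l₂ h₂
        rw [div_le_div_iff₀ hτ hl2] at hr1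
        have hu2 : u l₂ ≤ h l₂ := hu_le _ h₂ h hh
        rw [div_le_iff₀ hτ]
        nlinarith
      have := hu_ge l₁ h₁ _ hstep
      rw [div_le_iff₀ hτ] at this
      nlinarith
  have hub : u l₁ / u l₂ ≤ sInf S := by
    refine le_csInf hSne (fun τ hτS => ?_)
    rw [div_le_iff₀ hul2]
    have := (hSbound τ hτS).1
    nlinarith
  have hub2 : u l₂ / u l₁ ≤ sInf S := by
    refine le_csInf hSne (fun τ hτS => ?_)
    rw [div_le_iff₀ hul1]
    have := (hSbound τ hτS).2
    nlinarith
  have hSpos : 0 < sInf S := lt_of_lt_of_le (div_pos hul2 hul1) hub2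
  rw [hDist]
  refine ⟨?_, hub⟩
  have := one_div_le_one_div_of_le (div_pos hul2 hul1) hub2
  rwa [one_div_div] at this
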